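/- (Hyperteam Equivalence) Let φ be an ADIF formula and 𝕏, 𝕏' two hyperteams over supersets of sup(φ) with 𝕏 ≡_{free(φ)} 𝕏'. Then for each alternation flag α ∈ {∃∀,∀∃}: 𝔄, 𝕏 ⊨^α φ iff 𝔄, 𝕏' ⊨^α φ. -/
import Mathlib


open scoped Classical

namespace ADIF

/-- A relational first-order structure over a signature given by relation
symbols `RSym` with arities `ar`. -/
structure Struct (RSym : Type) (ar : RSym → ℕ) where
  A : Type
  nonempty : Nonempty A
  interp : ∀ R : RSym, (Fin (ar R) → A) → Prop

variable {Var RSym : Type} {ar : RSym → ℕ} {A : Type}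

/-- Partial assignments from variables to values. -/
abbrev Asg (Var A : Type) := Var → Option A

/-- Teams of assignments. -/
abbrev Team (Var A : Type) := Set (Asg Var A)

/-- Hyperteams: sets of teams. -/
abbrev Hyperteam (Var A : Type) := Set (Team Var A)

/-- The empty assignment. -/
def emptyAsg (Var A : Type) : Asg Var A := fun _ => none

/-- Domain of a partial assignment. -/
def dom (α : Asg Var A) : Set Var := {v | α v ≠ none}

/-- Restriction of an assignment to a set of variables. -/
noncomputable def restrictA (α : Asg Var A) (W : Set Var) : Asg Var A :=
  fun v => if v ∈ W then α v else none

/-- Restriction of a team. -/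
noncomputable def restrictT (X : Team Var A) (W : Set Var) : Team Var A :=
  (fun α => restrictA α W) '' X

/-- Restriction of a hyperteam. -/
noncomputable def restrictH (𝕏 : Hyperteam Var A) (W : Set Var) : Hyperteam Var A :=
  (fun X => restrictT X W) '' 𝕏

/-- The preorder `⊑` on hyperteams. -/
def incl (𝕏₁ 𝕏₂ : Hyperteam Var A) : Prop :=
  ∀ X₁ ∈ 𝕏₁, ∃ X₂ ∈ 𝕏₂, X₂ ⊆ X₁

/-- The equivalence `≡` on hyperteams. -/
def equivH (𝕏₁ 𝕏₂ : Hyperteam Var A) : Prop :=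
  incl 𝕏₁ 𝕏₂ ∧ incl 𝕏₂ 𝕏₁

/-- The preorder `⊑_W` on hyperteams, relativized to variables in `W`. -/
noncomputable def inclW (W : Set Var) (𝕏₁ 𝕏₂ : Hyperteam Var A) : Prop :=
  incl (restrictH 𝕏₁ W) (restrictH 𝕏₂ W)

/-- The equivalence `≡_W` on hyperteams, relativized to variables in `W`. -/
noncomputable def equivW (W : Set Var) (𝕏₁ 𝕏₂ : Hyperteam Var A) : Prop :=
  equivH (restrictH 𝕏₁ W) (restrictH 𝕏₂ W)

/-- The dual hyperteam `𝕏~`: the set of images of all choice functions for `𝕏`. -/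
def dualH (𝕏 : Hyperteam Var A) : Hyperteam Var A :=
  {Y | ∃ χ : Team Var A → Asg Var A, (∀ X ∈ 𝕏, χ X ∈ X) ∧ Y = χ '' 𝕏}

/-- A hyperteam is proper if it is neither empty nor null. -/
def Proper (𝕏 : Hyperteam Var A) : Prop := 𝕏 ≠ ∅ ∧ ∅ ∉ 𝕏

/-- All assignments in all teams of `𝕏` are defined exactly on `U`. -/
def HyperteamOn (𝕏 : Hyperteam Var A) (U : Set Var) : Prop :=
  ∀ X ∈ 𝕏, ∀ α ∈ X, dom α = U

/-- `𝕏` is a genuine hyperteam: all its assignments share the same domain. -/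
def IsHyperteam (𝕏 : Hyperteam Var A) : Prop := ∃ U : Set Var, HyperteamOn 𝕏 U

/-- `𝕏` is a hyperteam over some superset of `V`. -/
def OverSup (𝕏 : Hyperteam Var A) (V : Set Var) : Prop :=
  ∃ U : Set Var, V ⊆ U ∧ HyperteamOn 𝕏 U

/-- `W`-uniform functions from assignments to values. -/
def FW (W : Set Var) : Set (Asg Var A → A) :=
  {F | ∀ α : Asg Var A, F α = F (restrictA α W)}

/-- Update of an assignment at a variable. -/
noncomputable def updateA (α : Asg Var A) (x : Var) (a : A) : Asg Var A :=
  fun v => if v = x then some a else α v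

/-- Extension of an assignment by a function for a variable. -/
noncomputable def extA (α : Asg Var A) (F : Asg Var A → A) (x : Var) : Asg Var A :=
  updateA α x (F α)

/-- Extension of a team by a function for a variable. -/
noncomputable def extT (X : Team Var A) (F : Asg Var A → A) (x : Var) : Team Var A :=
  (fun α => extA α F x) '' X

/-- Extension of a hyperteam with a variable, `W`-uniformly. -/
noncomputable def extH (W : Set Var) (𝕏 : Hyperteam Var A) (x : Var) : Hyperteam Var A :=
  {Y | ∃ X ∈ 𝕏, ∃ F ∈ FW W, Y = extT X F x}

/-- Bipartitions of a hyperteam. -/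
def Bipartition (𝕏₁ 𝕏₂ 𝕏 : Hyperteam Var A) : Prop :=
  𝕏₁ ∩ 𝕏₂ = ∅ ∧ 𝕏₁ ∪ 𝕏₂ = 𝕏

/-- Cylindrification of a team with respect to a variable. -/
noncomputable def cylT (X : Team Var A) (x : Var) : Team Var A :=
  {β | ∃ α ∈ X, ∃ a : A, β = updateA α x a}

/-- Cylindrification of a hyperteam with respect to a variable. -/
noncomputable def cylH (𝕏 : Hyperteam Var A) (x : Var) : Hyperteam Var A :=
  (fun X => cylT X x) '' 𝕏

/-- ADIF formulas over variables `Var` and a relational signature. -/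
inductive Formula (Var RSym : Type) (ar : RSym → ℕ) : Type
  | fls : Formula Var RSym ar
  | tru : Formula Var RSym ar
  | atom (R : RSym) (xs : Fin (ar R) → Var) : Formula Var RSym ar
  | not (φ : Formula Var RSym ar) : Formula Var RSym ar
  | and (φ ψ : Formula Var RSym ar) : Formula Var RSym ar
  | or (φ ψ : Formula Var RSym ar) : Formula Var RSym ar
  | ex (s : Bool) (W : Finset Var) (x : Var) (φ : Formula Var RSym ar) : Formula Var RSym ar
  | all (s : Bool) (W : Finset Var) (x : Var) (φ : Formula Var RSym ar) : Formula Var RSym ar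

/-- The constraint set `⟦±W⟧`: `W` itself for `+` (`s = true`),
its complement for `−` (`s = false`). -/
def denot (s : Bool) (W : Finset Var) : Set Var :=
  if s then (↑W : Set Var) else (↑W : Set Var)ᶜ

/-- Support variables of an ADIF formula. -/
def supv : Formula Var RSym ar → Set Var
  | .fls => ∅
  | .tru => ∅
  | .atom _ xs => Set.range xs
  | .not φ => supv φ
  | .and φ ψ => supv φ ∪ supv ψ
  | .or φ ψ => supv φ ∪ supv ψ
  | .ex _ _ x φ => supv φ \ {x}
  | .all _ _ x φ => supv φ \ {x}

/-- Free variables of an ADIF formula. -/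
noncomputable def freev : Formula Var RSym ar → Set Var
  | .fls => ∅
  | .tru => ∅
  | .atom _ xs => Set.range xs
  | .not φ => freev φ
  | .and φ ψ => freev φ ∪ freev ψ
  | .or φ ψ => freev φ ∪ freev ψ
  | .ex s W x φ => if x ∈ freev φ then (freev φ \ {x}) ∪ denot s W else freev φ
  | .all s W x φ => if x ∈ freev φ then (freev φ \ {x}) ∪ denot s W else freev φ

/-- Alternation flags. -/
inductive Flag : Type
  | EA : Flag
  | AE : Flag

/-- The dual alternation flag. -/
def Flag.dual : Flag → Flag
  | .EA => .AE
  | .AE => .EA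

/-- Satisfaction of an atom by a (partial) assignment. -/
def atomSat (𝔄 : Struct RSym ar) (R : RSym) (xs : Fin (ar R) → Var)
    (α : Asg Var 𝔄.A) : Prop :=
  ∃ v : Fin (ar R) → 𝔄.A, (∀ i, α (xs i) = some (v i)) ∧ 𝔄.interp R v

/-- Hodges' alternating satisfaction relation `𝔄, 𝕏 ⊨^fl φ` for ADIF. -/
noncomputable def sat (𝔄 : Struct RSym ar) :
    Formula Var RSym ar → Flag → Hyperteam Var 𝔄.A → Prop
  | .fls, .EA, 𝕏 => ∅ ∈ 𝕏
  | .fls, .AE, 𝕏 => 𝕏 = ∅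
  | .tru, .EA, 𝕏 => 𝕏 ≠ ∅
  | .tru, .AE, 𝕏 => ∅ ∉ 𝕏
  | .atom R xs, .EA, 𝕏 => ∃ X ∈ 𝕏, ∀ α ∈ X, atomSat 𝔄 R xs α
  | .atom R xs, .AE, 𝕏 => ∀ X ∈ 𝕏, ∃ α ∈ X, atomSat 𝔄 R xs α
  | .not φ, fl, 𝕏 => ¬ sat 𝔄 φ fl.dual 𝕏
  | .and φ ψ, .EA, 𝕏 =>
      ∀ 𝕏₁ 𝕏₂, Bipartition 𝕏₁ 𝕏₂ 𝕏 → sat 𝔄 φ .EA 𝕏₁ ∨ sat 𝔄 ψ .EA 𝕏₂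
  | .and φ ψ, .AE, 𝕏 =>
      ∀ 𝕏₁ 𝕏₂, Bipartition 𝕏₁ 𝕏₂ (dualH 𝕏) → sat 𝔄 φ .EA 𝕏₁ ∨ sat 𝔄 ψ .EA 𝕏₂
  | .or φ ψ, .AE, 𝕏 =>
      ∃ 𝕏₁ 𝕏₂, Bipartition 𝕏₁ 𝕏₂ 𝕏 ∧ sat 𝔄 φ .AE 𝕏₁ ∧ sat 𝔄 ψ .AE 𝕏₂
  | .or φ ψ, .EA, 𝕏 =>
      ∃ 𝕏₁ 𝕏₂, Bipartition 𝕏₁ 𝕏₂ (dualH 𝕏) ∧ sat 𝔄 φ .AE 𝕏₁ ∧ sat 𝔄 ψ .AE 𝕏₂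
  | .ex s W x φ, .EA, 𝕏 => sat 𝔄 φ .EA (extH (denot s W) 𝕏 x)
  | .ex s W x φ, .AE, 𝕏 => sat 𝔄 φ .EA (extH (denot s W) (dualH 𝕏) x)
  | .all s W x φ, .AE, 𝕏 => sat 𝔄 φ .AE (extH (denot s W) 𝕏 x)
  | .all s W x φ, .EA, 𝕏 => sat 𝔄 φ .AE (extH (denot s W) (dualH 𝕏) x)

/-- `φ` is `fl`-satisfiable on `𝔄`: some proper hyperteam over `sup φ` satisfies it. -/
noncomputable def SatOn (𝔄 : Struct RSym ar) (fl : Flag) (φ : Formula Var RSym ar) : Prop :=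
  ∃ 𝕏 : Hyperteam Var 𝔄.A, HyperteamOn 𝕏 (supv φ) ∧ Proper 𝕏 ∧ sat 𝔄 φ fl 𝕏

/-- `φ` is `fl`-satisfiable: `fl`-satisfiable on some structure. -/
noncomputable def Satisfiable (Var : Type) {RSym : Type} {ar : RSym → ℕ}
    (fl : Flag) (φ : Formula Var RSym ar) : Prop :=
  ∃ 𝔄 : Struct RSym ar, SatOn 𝔄 fl φ

/-- `φ ⇛^fl ψ`: `fl`-implication between ADIF formulas. -/
noncomputable def ImpliesF (fl : Flag) (φ ψ : Formula Var RSym ar) : Prop :=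
  ∀ 𝔄 : Struct RSym ar, ∀ 𝕏 : Hyperteam Var 𝔄.A,
    OverSup 𝕏 (supv φ ∪ supv ψ) → sat 𝔄 φ fl 𝕏 → sat 𝔄 ψ fl 𝕏

/-- `φ ≅^fl ψ`: `fl`-equivalence between ADIF formulas. -/
noncomputable def EquivFlagF (fl : Flag) (φ ψ : Formula Var RSym ar) : Prop :=
  ImpliesF fl φ ψ ∧ ImpliesF fl ψ φ

/-- `φ ≅ ψ`: equivalence for both alternation flags. -/
noncomputable def EquivF (φ ψ : Formula Var RSym ar) : Prop :=
  ∀ fl : Flag, EquivFlagF fl φ ψ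

end ADIF

namespace ADIF

variable {Var RSym : Type} {ar : RSym → ℕ} {A : Type}

/-- A formula is atomic if it is `⊥`, `⊤` or a relational atom. -/
def IsAtomic : Formula Var RSym ar → Prop
  | .fls => True
  | .tru => True
  | .atom _ _ => True
  | _ => False

/-- Negation normal form: negation is applied only to atomic formulas. -/
def IsNNF : Formula Var RSym ar → Prop
  | .fls => True
  | .tru => True
  | .atom _ _ => True
  | .not φ => IsAtomic φ
  | .and φ ψ => IsNNF φ ∧ IsNNF ψ
  | .or φ ψ => IsNNF φ ∧ IsNNF ψ
  | .ex _ _ _ φ => IsNNF φ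
  | .all _ _ _ φ => IsNNF φ

/-- An item `Q^{±W}x` of a quantifier prefix: `q = true` means `∃`,
`q = false` means `∀`; `s = true` means `+W`, `s = false` means `−W`. -/
structure QItem (Var : Type) where
  q : Bool
  s : Bool
  W : Finset Var
  x : Var

/-- The constraint set of a quantifier-prefix item. -/
def QItem.constr (i : QItem Var) : Set Var := denot i.s i.W

/-- Well-formed quantifier prefixes: each variable is quantified at most once,
does not occur in its own constraint set, and is not quantified in the scope of
a quantifier whose constraint set contains it. -/
def GoodPrefix : List (QItem Var) → Prop
  | [] => True
  | i :: rest =>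
      i.x ∉ i.constr ∧ (∀ j ∈ rest, j.x ≠ i.x ∧ j.x ∉ i.constr) ∧ GoodPrefix rest

/-- Prefixing a formula by a quantifier prefix. -/
def applyPrefix : List (QItem Var) → Formula Var RSym ar → Formula Var RSym ar
  | [], φ => φ
  | i :: rest, φ =>
      if i.q then Formula.ex i.s i.W i.x (applyPrefix rest φ)
      else Formula.all i.s i.W i.x (applyPrefix rest φ)

/-- The extension operator `ext^fl(𝕏, Q^{±W}x)` for a single quantifier. -/
noncomputable def extQ (fl : Flag) (𝕏 : Hyperteam Var A) (i : QItem Var) : Hyperteam Var A :=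
  match fl, i.q with
  | .EA, true => extH (denot i.s i.W) 𝕏 i.x
  | .AE, false => extH (denot i.s i.W) 𝕏 i.x
  | .EA, false => dualH (extH (denot i.s i.W) (dualH 𝕏) i.x)
  | .AE, true => dualH (extH (denot i.s i.W) (dualH 𝕏) i.x)

/-- The extension operator `ext^fl(𝕏, ℘)` for a quantifier prefix. -/
noncomputable def extP (fl : Flag) : Hyperteam Var A → List (QItem Var) → Hyperteam Var A
  | 𝕏, [] => 𝕏
  | 𝕏, i :: rest => extP fl (extQ fl 𝕏 i) rest

/-- Ordinary first-order formulas over the signature. -/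
inductive FForm (Var RSym : Type) (ar : RSym → ℕ) : Type
  | fls : FForm Var RSym ar
  | tru : FForm Var RSym ar
  | atom (R : RSym) (xs : Fin (ar R) → Var) : FForm Var RSym ar
  | not (φ : FForm Var RSym ar) : FForm Var RSym ar
  | and (φ ψ : FForm Var RSym ar) : FForm Var RSym ar
  | or (φ ψ : FForm Var RSym ar) : FForm Var RSym ar
  | ex (x : Var) (φ : FForm Var RSym ar) : FForm Var RSym ar
  | all (x : Var) (φ : FForm Var RSym ar) : FForm Var RSym ar

/-- Free variables of a first-order formula. -/
def folFree : FForm Var RSym ar → Set Var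
  | .fls => ∅
  | .tru => ∅
  | .atom _ xs => Set.range xs
  | .not φ => folFree φ
  | .and φ ψ => folFree φ ∪ folFree ψ
  | .or φ ψ => folFree φ ∪ folFree ψ
  | .ex x φ => folFree φ \ {x}
  | .all x φ => folFree φ \ {x}

/-- Standard Tarskian satisfaction `𝔄, α ⊨_FOL φ` for first-order formulas. -/
noncomputable def folSat (𝔄 : Struct RSym ar) : FForm Var RSym ar → Asg Var 𝔄.A → Prop
  | .fls, _ => False
  | .tru, _ => True
  | .atom R xs, α => atomSat 𝔄 R xs α
  | .not φ, α => ¬ folSat 𝔄 φ α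
  | .and φ ψ, α => folSat 𝔄 φ α ∧ folSat 𝔄 ψ α
  | .or φ ψ, α => folSat 𝔄 φ α ∨ folSat 𝔄 ψ α
  | .ex x φ, α => ∃ a : 𝔄.A, folSat 𝔄 φ (updateA α x a)
  | .all x φ, α => ∀ a : 𝔄.A, folSat 𝔄 φ (updateA α x a)

/-- The FOL fragment of ADIF: every quantifier is `Q^{+W}x` with
`W = sup(φ) ∖ {x}`. -/
def IsFOLFrag : Formula Var RSym ar → Prop
  | .fls => True
  | .tru => True
  | .atom _ _ => True
  | .not φ => IsFOLFrag φ
  | .and φ ψ => IsFOLFrag φ ∧ IsFOLFrag ψ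
  | .or φ ψ => IsFOLFrag φ ∧ IsFOLFrag ψ
  | .ex s W x φ => s = true ∧ (↑W : Set Var) = supv φ \ {x} ∧ IsFOLFrag φ
  | .all s W x φ => s = true ∧ (↑W : Set Var) = supv φ \ {x} ∧ IsFOLFrag φ

/-- Tarskian satisfaction of an ADIF formula (in the FOL fragment) by an
assignment, quantifier decorations being ignored. -/
noncomputable def tarskiSat (𝔄 : Struct RSym ar) : Formula Var RSym ar → Asg Var 𝔄.A → Prop
  | .fls, _ => False
  | .tru, _ => True
  | .atom R xs, α => atomSat 𝔄 R xs α
  | .not φ, α => ¬ tarskiSat 𝔄 φ α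
  | .and φ ψ, α => tarskiSat 𝔄 φ α ∧ tarskiSat 𝔄 ψ α
  | .or φ ψ, α => tarskiSat 𝔄 φ α ∨ tarskiSat 𝔄 ψ α
  | .ex _ _ x φ, α => ∃ a : 𝔄.A, tarskiSat 𝔄 φ (updateA α x a)
  | .all _ _ x φ, α => ∀ a : 𝔄.A, tarskiSat 𝔄 φ (updateA α x a)

end ADIF

namespace ADIF

variable {Var RSym : Type} {ar : RSym → ℕ} {A : Type}

/-- Pointwise characterization of `inclW`. -/
def inclR (W : Set Var) (𝕏₁ 𝕏₂ : Hyperteam Var A) : Prop :=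
  ∀ X₁ ∈ 𝕏₁, ∃ X₂ ∈ 𝕏₂, restrictT X₂ W ⊆ restrictT X₁ W

lemma inclW_iff {W : Set Var} {𝕏₁ 𝕏₂ : Hyperteam Var A} :
    inclW W 𝕏₁ 𝕏₂ ↔ inclR W 𝕏₁ 𝕏₂ := by
  constructor
  · intro h X₁ hX₁
    obtain ⟨Y, ⟨X₂, hX₂, rfl⟩, hsub⟩ := h (restrictT X₁ W) ⟨X₁, hX₁, rfl⟩
    exact ⟨X₂, hX₂, hsub⟩
  · rintro h Y ⟨X₁, hX₁, rfl⟩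
    obtain ⟨X₂, hX₂, hsub⟩ := h X₁ hX₁
    exact ⟨restrictT X₂ W, ⟨X₂, hX₂, rfl⟩, hsub⟩

lemma restrictA_restrictA {V W : Set Var} (hVW : V ⊆ W) (α : Asg Var A) :
    restrictA (restrictA α W) V = restrictA α V := by
  funext v
  by_cases hv : v ∈ V <;> simp [restrictA, hv, hVW, *]
  · simp [hVW hv]

lemma restrictA_eq_of_agree {V W : Set Var} (hVW : V ⊆ W) {α β : Asg Var A}
    (h : restrictA α W = restrictA β W) : restrictA α V = restrictA β V := by
  rw [← restrictA_restrictA hVW α, ← restrictA_restrictA hVW β, h]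

lemma restrictT_mono_set {V W : Set Var} (hVW : V ⊆ W) {X Y : Team Var A}
    (h : restrictT X W ⊆ restrictT Y W) : restrictT X V ⊆ restrictT Y V := by
  rintro _ ⟨α, hα, rfl⟩
  obtain ⟨β, hβ, hr⟩ := h ⟨α, hα, rfl⟩
  exact ⟨β, hβ, (restrictA_eq_of_agree hVW hr.symm).symm⟩

lemma inclR_mono {V W : Set Var} (hVW : V ⊆ W) {𝕏₁ 𝕏₂ : Hyperteam Var A}
    (h : inclR W 𝕏₁ 𝕏₂) : inclR V 𝕏₁ 𝕏₂ := by
  intro X₁ hX₁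
  obtain ⟨X₂, hX₂, hsub⟩ := h X₁ hX₁
  exact ⟨X₂, hX₂, restrictT_mono_set hVW hsub⟩

lemma restrictT_empty_iff {W : Set Var} {X : Team Var A} :
    restrictT X W = ∅ ↔ X = ∅ := Set.image_eq_empty

lemma eq_empty_of_restrict_subset_empty {W : Set Var} {X : Team Var A}
    (h : restrictT X W ⊆ restrictT (∅ : Team Var A) W) : X = ∅ := by
  rw [← restrictT_empty_iff (W := W)]
  have : restrictT (∅ : Team Var A) W = ∅ := by simp [restrictT]
  rw [this] at h
  exact Set.subset_empty_iff.mp h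

/-- Dualization reverses `⊑_W`. -/
lemma inclR_dual {W : Set Var} {𝕏₁ 𝕏₂ : Hyperteam Var A}
    (h : inclR W 𝕏₁ 𝕏₂) : inclR W (dualH 𝕏₂) (dualH 𝕏₁) := by
  rintro Y₂ ⟨χ₂, hχ₂, rfl⟩
  -- for each X ∈ 𝕏₁, produce β ∈ X whose restriction matches a value of χ₂
  have key : ∀ X ∈ 𝕏₁, ∃ β ∈ X, ∃ X₂ ∈ 𝕏₂,
      restrictA β W = restrictA (χ₂ X₂) W := by
    intro X hX
    obtain ⟨X₂, hX₂, hsub⟩ := h X hX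
    have hmem : restrictA (χ₂ X₂) W ∈ restrictT X₂ W :=
      ⟨χ₂ X₂, hχ₂ X₂ hX₂, rfl⟩
    obtain ⟨β, hβ, hr⟩ := hsub hmem
    exact ⟨β, hβ, X₂, hX₂, hr⟩
  classical
  let χ₁ : Team Var A → Asg Var A := fun X =>
    if hX : X ∈ 𝕏₁ then (key X hX).choose else emptyAsg Var A
  refine ⟨χ₁ '' 𝕏₁, ⟨χ₁, ?_, rfl⟩, ?_⟩
  · intro X hX
    simp only [χ₁, dif_pos hX]
    exact (key X hX).choose_spec.1
  · rintro _ ⟨_, ⟨X, hX, rfl⟩, rfl⟩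
    simp only [χ₁, dif_pos hX]
    obtain ⟨hβ, X₂, hX₂, hr⟩ := (key X hX).choose_spec
    exact ⟨χ₂ X₂, ⟨X₂, hX₂, rfl⟩, hr.symm⟩

/-- Extension preserves `⊑`, with suitable sets of variables. -/
lemma inclR_ext {W W' V : Set Var} {x : Var} {𝕏₁ 𝕏₂ : Hyperteam Var A}
    (hV : V \ {x} ⊆ W') (hW : x ∈ V → W ⊆ W')
    (h : inclR W' 𝕏₁ 𝕏₂) :
    inclR V (extH W 𝕏₁ x) (extH W 𝕏₂ x) := by
  rintro _ ⟨X₁, hX₁, F, hF, rfl⟩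
  obtain ⟨X₂, hX₂, hsub⟩ := h X₁ hX₁
  refine ⟨extT X₂ F x, ⟨X₂, hX₂, F, hF, rfl⟩, ?_⟩
  rintro _ ⟨_, ⟨α₂, hα₂, rfl⟩, rfl⟩
  obtain ⟨β, hβ, hr⟩ := hsub ⟨α₂, hα₂, rfl⟩
  refine ⟨extA β F x, ⟨β, hβ, rfl⟩, ?_⟩
  funext v
  by_cases hv : v ∈ V
  · by_cases hvx : v = x
    · subst hvx
      have hWsub : W ⊆ W' := hW hv
      have hFeq : F α₂ = F β := by
        rw [hF α₂, hF β,
          restrictA_eq_of_agree hWsub (show restrictA α₂ W' = restrictA β W' from hr.symm)]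
      simp [restrictA, extA, updateA, hv, hFeq]
    · have hvW' : v ∈ W' := hV ⟨hv, hvx⟩
      have : α₂ v = β v := by
        have := congrFun hr v
        simpa [restrictA, hvW'] using this.symm
      simp [restrictA, extA, updateA, hv, hvx, this]
  · simp [restrictA, hv]

/-- Pulling back a bipartition along `⊑`. -/
lemma bipartition_pullback {V : Set Var} {𝕏₁ 𝕏₂ 𝕐₁ 𝕐₂ : Hyperteam Var A}
    (h : inclR V 𝕏₁ 𝕏₂) (hbip : Bipartition 𝕐₁ 𝕐₂ 𝕏₂) :
    ∃ ℤ₁ ℤ₂ : Hyperteam Var A, Bipartition ℤ₁ ℤ₂ 𝕏₁ ∧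
      inclR V ℤ₁ 𝕐₁ ∧ inclR V ℤ₂ 𝕐₂ := by
  classical
  obtain ⟨hdisj, huni⟩ := hbip
  let g : Team Var A → Team Var A := fun X =>
    if hX : X ∈ 𝕏₁ then (h X hX).choose else ∅
  have hg : ∀ X (hX : X ∈ 𝕏₁), g X ∈ 𝕏₂ ∧ restrictT (g X) V ⊆ restrictT X V := by
    intro X hX
    simp only [g, dif_pos hX]
    exact ⟨(h X hX).choose_spec.1, (h X hX).choose_spec.2⟩
  refine ⟨{X ∈ 𝕏₁ | g X ∈ 𝕐₁}, {X ∈ 𝕏₁ | g X ∉ 𝕐₁}, ⟨?_, ?_⟩, ?_, ?_⟩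
  · ext X; simp only [Set.mem_inter_iff, Set.mem_setOf_eq, Set.mem_empty_iff_false]
    tauto
  · ext X; simp only [Set.mem_union, Set.mem_setOf_eq]
    tauto
  · rintro X ⟨hX, hgX⟩
    exact ⟨g X, hgX, (hg X hX).2⟩
  · rintro X ⟨hX, hgX⟩
    have : g X ∈ 𝕐₁ ∪ 𝕐₂ := huni ▸ (hg X hX).1
    exact ⟨g X, this.resolve_left hgX, (hg X hX).2⟩

lemma atomSat_congr {𝔄 : Struct RSym ar} {R : RSym} {xs : Fin (ar R) → Var}
    {α β : Asg Var 𝔄.A} (h : restrictA α (Set.range xs) = restrictA β (Set.range xs)) :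
    atomSat 𝔄 R xs α ↔ atomSat 𝔄 R xs β := by
  have hpt : ∀ i, α (xs i) = β (xs i) := by
    intro i
    have := congrFun h (xs i)
    simpa [restrictA, Set.mem_range] using this
  unfold atomSat
  constructor
  · rintro ⟨v, hv, hR⟩
    exact ⟨v, fun i => by rw [← hpt i]; exact hv i, hR⟩
  · rintro ⟨v, hv, hR⟩
    exact ⟨v, fun i => by rw [hpt i]; exact hv i, hR⟩

lemma freev_diff_subset_ex {s : Bool} {W : Finset Var} {x : Var} (φ : Formula Var RSym ar) :
    freev φ \ {x} ⊆ freev (Formula.ex s W x φ) := by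
  by_cases hx : x ∈ freev φ <;> simp [freev, hx, Set.diff_subset]

lemma denot_subset_ex {s : Bool} {W : Finset Var} {x : Var} (φ : Formula Var RSym ar)
    (hx : x ∈ freev φ) : denot s W ⊆ freev (Formula.ex s W x φ) := by
  simp [freev, hx]

lemma freev_diff_subset_all {s : Bool} {W : Finset Var} {x : Var} (φ : Formula Var RSym ar) :
    freev φ \ {x} ⊆ freev (Formula.all s W x φ) := by
  by_cases hx : x ∈ freev φ <;> simp [freev, hx, Set.diff_subset]

lemma denot_subset_all {s : Bool} {W : Finset Var} {x : Var} (φ : Formula Var RSym ar)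
    (hx : x ∈ freev φ) : denot s W ⊆ freev (Formula.all s W x φ) := by
  simp [freev, hx]

end ADIF

namespace ADIF

variable {Var RSym : Type} {ar : RSym → ℕ}

/-- Monotonicity of satisfaction along `⊑` on the free variables:
`∃∀`-satisfaction transfers upwards and `∀∃`-satisfaction downwards. -/
theorem sat_mono (𝔄 : Struct RSym ar) :
    ∀ (φ : Formula Var RSym ar) (𝕏₁ 𝕏₂ : Hyperteam Var 𝔄.A),
      inclR (freev φ) 𝕏₁ 𝕏₂ →
      (sat 𝔄 φ .EA 𝕏₁ → sat 𝔄 φ .EA 𝕏₂) ∧ (sat 𝔄 φ .AE 𝕏₂ → sat 𝔄 φ .AE 𝕏₁) := by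
  intro φ
  induction φ with
  | fls =>
    intro 𝕏₁ 𝕏₂ h
    constructor
    · intro h1
      simp only [sat] at h1 ⊢
      obtain ⟨X₂, hX₂, hsub⟩ := h ∅ h1
      rwa [eq_empty_of_restrict_subset_empty hsub] at hX₂
    · intro h2
      simp only [sat] at h2 ⊢
      rw [Set.eq_empty_iff_forall_notMem]
      intro X hX
      obtain ⟨X₂, hX₂, -⟩ := h X hX
      rw [h2] at hX₂
      exact hX₂
  | tru =>
    intro 𝕏₁ 𝕏₂ h
    constructor
    · intro h1
      simp only [sat] at h1 ⊢
      obtain ⟨X, hX⟩ := Set.nonempty_iff_ne_empty.mpr h1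
      obtain ⟨X₂, hX₂, -⟩ := h X hX
      exact Set.nonempty_iff_ne_empty.mp ⟨X₂, hX₂⟩
    · intro h2
      simp only [sat] at h2 ⊢
      intro h1
      obtain ⟨X₂, hX₂, hsub⟩ := h ∅ h1
      rw [eq_empty_of_restrict_subset_empty hsub] at hX₂
      exact h2 hX₂
  | atom R xs =>
    intro 𝕏₁ 𝕏₂ h
    have h' : inclR (Set.range xs) 𝕏₁ 𝕏₂ := h
    constructor
    · intro h1
      simp only [sat] at h1 ⊢
      obtain ⟨X₁, hX₁, hall⟩ := h1
      obtain ⟨X₂, hX₂, hsub⟩ := h' X₁ hX₁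
      refine ⟨X₂, hX₂, fun α hα => ?_⟩
      obtain ⟨β, hβ, hr⟩ := hsub ⟨α, hα, rfl⟩
      exact (atomSat_congr (show restrictA α (Set.range xs) = restrictA β (Set.range xs)
        from hr.symm)).mpr (hall β hβ)
    · intro h2
      simp only [sat] at h2 ⊢
      intro X₁ hX₁
      obtain ⟨X₂, hX₂, hsub⟩ := h' X₁ hX₁
      obtain ⟨α, hα, hsat⟩ := h2 X₂ hX₂
      obtain ⟨β, hβ, hr⟩ := hsub ⟨α, hα, rfl⟩
      exact ⟨β, hβ, (atomSat_congr (show restrictA β (Set.range xs) =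
        restrictA α (Set.range xs) from hr)).mpr hsat⟩
  | not φ ih =>
    intro 𝕏₁ 𝕏₂ h
    have h' : inclR (freev φ) 𝕏₁ 𝕏₂ := h
    constructor
    · intro h1
      simp only [sat, Flag.dual] at h1 ⊢
      exact fun hc => h1 ((ih 𝕏₁ 𝕏₂ h').2 hc)
    · intro h2
      simp only [sat, Flag.dual] at h2 ⊢
      exact fun hc => h2 ((ih 𝕏₁ 𝕏₂ h').1 hc)
  | and φ ψ ihφ ihψ =>
    intro 𝕏₁ 𝕏₂ h
    have main : ∀ 𝔸 𝔹 : Hyperteam Var 𝔄.A, inclR (freev φ ∪ freev ψ) 𝔸 𝔹 →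
        (∀ 𝕐₁ 𝕐₂, Bipartition 𝕐₁ 𝕐₂ 𝔸 → sat 𝔄 φ .EA 𝕐₁ ∨ sat 𝔄 ψ .EA 𝕐₂) →
        (∀ 𝕐₁ 𝕐₂, Bipartition 𝕐₁ 𝕐₂ 𝔹 → sat 𝔄 φ .EA 𝕐₁ ∨ sat 𝔄 ψ .EA 𝕐₂) := by
      intro 𝔸 𝔹 hAB hA 𝕐₁ 𝕐₂ hbip
      obtain ⟨ℤ₁, ℤ₂, hbz, hz1, hz2⟩ := bipartition_pullback hAB hbip
      rcases hA ℤ₁ ℤ₂ hbz with hz | hz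
      · exact Or.inl ((ihφ ℤ₁ 𝕐₁ (inclR_mono Set.subset_union_left hz1)).1 hz)
      · exact Or.inr ((ihψ ℤ₂ 𝕐₂ (inclR_mono Set.subset_union_right hz2)).1 hz)
    have h' : inclR (freev φ ∪ freev ψ) 𝕏₁ 𝕏₂ := h
    constructor
    · intro h1
      simp only [sat] at h1 ⊢
      exact main 𝕏₁ 𝕏₂ h' h1
    · intro h2
      simp only [sat] at h2 ⊢
      exact main (dualH 𝕏₂) (dualH 𝕏₁) (inclR_dual h') h2
  | or φ ψ ihφ ihψ =>
    intro 𝕏₁ 𝕏₂ h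
    have main : ∀ 𝔸 𝔹 : Hyperteam Var 𝔄.A, inclR (freev φ ∪ freev ψ) 𝔸 𝔹 →
        (∃ 𝕐₁ 𝕐₂, Bipartition 𝕐₁ 𝕐₂ 𝔹 ∧ sat 𝔄 φ .AE 𝕐₁ ∧ sat 𝔄 ψ .AE 𝕐₂) →
        (∃ 𝕐₁ 𝕐₂, Bipartition 𝕐₁ 𝕐₂ 𝔸 ∧ sat 𝔄 φ .AE 𝕐₁ ∧ sat 𝔄 ψ .AE 𝕐₂) := by
      rintro 𝔸 𝔹 hAB ⟨𝕐₁, 𝕐₂, hbip, hs1, hs2⟩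
      obtain ⟨ℤ₁, ℤ₂, hbz, hz1, hz2⟩ := bipartition_pullback hAB hbip
      exact ⟨ℤ₁, ℤ₂, hbz,
        (ihφ ℤ₁ 𝕐₁ (inclR_mono Set.subset_union_left hz1)).2 hs1,
        (ihψ ℤ₂ 𝕐₂ (inclR_mono Set.subset_union_right hz2)).2 hs2⟩
    have h' : inclR (freev φ ∪ freev ψ) 𝕏₁ 𝕏₂ := h
    constructor
    · intro h1
      simp only [sat] at h1 ⊢
      exact main (dualH 𝕏₂) (dualH 𝕏₁) (inclR_dual h') h1
    · intro h2
      simp only [sat] at h2 ⊢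
      exact main 𝕏₁ 𝕏₂ h' h2
  | ex s W x φ ih =>
    intro 𝕏₁ 𝕏₂ h
    have hext : ∀ 𝔸 𝔹 : Hyperteam Var 𝔄.A,
        inclR (freev (Formula.ex s W x φ)) 𝔸 𝔹 →
        inclR (freev φ) (extH (denot s W) 𝔸 x) (extH (denot s W) 𝔹 x) :=
      fun 𝔸 𝔹 hAB =>
        inclR_ext (freev_diff_subset_ex φ) (fun hx => denot_subset_ex φ hx) hAB
    constructor
    · intro h1
      simp only [sat] at h1 ⊢
      exact (ih _ _ (hext 𝕏₁ 𝕏₂ h)).1 h1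
    · intro h2
      simp only [sat] at h2 ⊢
      exact (ih _ _ (hext (dualH 𝕏₂) (dualH 𝕏₁) (inclR_dual h))).1 h2
  | all s W x φ ih =>
    intro 𝕏₁ 𝕏₂ h
    have hext : ∀ 𝔸 𝔹 : Hyperteam Var 𝔄.A,
        inclR (freev (Formula.all s W x φ)) 𝔸 𝔹 →
        inclR (freev φ) (extH (denot s W) 𝔸 x) (extH (denot s W) 𝔹 x) :=
      fun 𝔸 𝔹 hAB =>
        inclR_ext (freev_diff_subset_all φ) (fun hx => denot_subset_all φ hx) hAB
    constructor
    · intro h1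
      simp only [sat] at h1 ⊢
      exact (ih _ _ (hext (dualH 𝕏₂) (dualH 𝕏₁) (inclR_dual h))).2 h1
    · intro h2
      simp only [sat] at h2 ⊢
      exact (ih _ _ (hext 𝕏₁ 𝕏₂ h)).2 h2

end ADIF

namespace ADIF

/-- Hyperteam Equivalence. -/
theorem hyperteam_equivalence {Var RSym : Type} {ar : RSym → ℕ}
    (𝔄 : Struct RSym ar) (φ : Formula Var RSym ar)
    (𝕏 𝕏' : Hyperteam Var 𝔄.A)
    (h𝕏 : OverSup 𝕏 (supv φ)) (h𝕏' : OverSup 𝕏' (supv φ))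
    (heqv : equivW (freev φ) 𝕏 𝕏') :
    ∀ fl : Flag, (sat 𝔄 φ fl 𝕏 ↔ sat 𝔄 φ fl 𝕏') := by
  have h12 : inclR (freev φ) 𝕏 𝕏' := inclW_iff.mp heqv.1
  have h21 : inclR (freev φ) 𝕏' 𝕏 := inclW_iff.mp heqv.2
  intro fl
  cases fl with
  | EA => exact ⟨(sat_mono 𝔄 φ 𝕏 𝕏' h12).1, (sat_mono 𝔄 φ 𝕏' 𝕏 h21).1⟩
  | AE => exact ⟨(sat_mono 𝔄 φ 𝕏' 𝕏 h21).2, (sat_mono 𝔄 φ 𝕏 𝕏' h12).2⟩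

end ADIF
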